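/- arXiv:2110.02813 — 2 statements merged into one kernel-verified Lean document; each statement's English description precedes it below -/
import Mathlib

section
/- If f : ℝⁿ → ℝ is convex and differentiable with L-Lipschitz gradient (L > 0), and gradient descent with fixed step size t ≤ 1/L is run for k iterations from u⁰, producing iterates uᵏ⁺¹ = uᵏ − t∇f(uᵏ), then f(uᵏ) − f(u*) ≤ ‖u⁰ − u*‖²/(2tk), where u* is any minimizer of f. -/
open RealInnerProductSpace

section Aux

variable {F : Type*} [NormedAddCommGroup F] [InnerProductSpace ℝ F] [CompleteSpace F]

lemma line_hasDerivAt (f : F → ℝ) (hdiff : Differentiable ℝ f) (x d : F) (s : ℝ) :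
    HasDerivAt (fun s : ℝ => f (x + s • d)) ⟪gradient f (x + s • d), d⟫ s := by
  have hγ : HasDerivAt (fun s : ℝ => x + s • d) d s := by
    simpa using ((hasDerivAt_id s).smul_const d).const_add x
  have hf := (hdiff (x + s • d)).hasGradientAt
  rw [hasGradientAt_iff_hasFDerivAt] at hf
  have := hf.comp_hasDerivAt s hγ
  simpa [InnerProductSpace.toDual_apply_apply, Function.comp_def] using this

/-- First-order characterization of convexity. -/
lemma convex_grad_le (f : F → ℝ) (hconv : ConvexOn ℝ Set.univ f)
    (hdiff : Differentiable ℝ f) (x y : F) :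
    f x + ⟪gradient f x, y - x⟫ ≤ f y := by
  set d := y - x with hd
  have hg : HasDerivAt (fun s : ℝ => f (x + s • d)) ⟪gradient f x, d⟫ 0 := by
    simpa using line_hasDerivAt f hdiff x d 0
  have htend := hg.tendsto_slope_zero
  have htend' : Filter.Tendsto (fun s : ℝ => s⁻¹ • (f (0 + s • d + x) - f (0 + x)))
      (nhdsWithin 0 (Set.Ioi 0)) (nhds ⟪gradient f x, d⟫) := by
    refine (htend.mono_left (nhdsWithin_mono 0 ?_)).congr (by intro s; simp [add_comm])
    intro s hs
    exact ne_of_gt hs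
  have hev : ∀ᶠ s in nhdsWithin (0:ℝ) (Set.Ioi 0),
      s⁻¹ • (f (0 + s • d + x) - f (0 + x)) ≤ f y - f x := by
    filter_upwards [Ioc_mem_nhdsGT_of_mem (by constructor <;> norm_num :
        (0:ℝ) ∈ Set.Ico (0:ℝ) 1)] with s hs
    obtain ⟨hs0, hs1⟩ := hs
    have hcvx := hconv.2 (Set.mem_univ x) (Set.mem_univ y)
      (by linarith : (0:ℝ) ≤ 1 - s) (le_of_lt hs0) (by ring)
    have hxy : (1 - s) • x + s • y = x + s • d := by
      rw [hd]; module
    rw [hxy] at hcvx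
    have h1 : f (x + s • d) - f x ≤ s * (f y - f x) := by
      have : f (x + s • d) ≤ (1 - s) * f x + s * f y := by
        simpa [smul_eq_mul] using hcvx
      nlinarith
    have : s⁻¹ * (f (x + s • d) - f x) ≤ f y - f x := by
      rw [inv_mul_le_iff₀ hs0]
      calc f (x + s • d) - f x ≤ s * (f y - f x) := h1
        _ = s * (f y - f x) := rfl
    simpa [smul_eq_mul, add_comm] using this
  have := le_of_tendsto htend' hev
  linarith

/-- Descent lemma for functions with Lipschitz gradient. -/
lemma descent_lemma (f : F → ℝ) (L : ℝ) (hL : 0 < L)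
    (hdiff : Differentiable ℝ f)
    (hlip : ∀ x y, ‖gradient f x - gradient f y‖ ≤ L * ‖x - y‖) (x y : F) :
    f y ≤ f x + ⟪gradient f x, y - x⟫ + L / 2 * ‖y - x‖ ^ 2 := by
  set d := y - x with hd
  set c : ℝ := ⟪gradient f x, d⟫ with hc
  set h : ℝ → ℝ := fun s => f (x + s • d) - s * c - L / 2 * s ^ 2 * ‖d‖ ^ 2 with hh
  have hder : ∀ s : ℝ, HasDerivAt h
      (⟪gradient f (x + s • d), d⟫ - c - L * s * ‖d‖ ^ 2) s := by
    intro s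
    have h1 := line_hasDerivAt f hdiff x d s
    have h2 : HasDerivAt (fun s : ℝ => s * c) c s := by
      simpa using (hasDerivAt_id s).mul_const c
    have h3 : HasDerivAt (fun s : ℝ => L / 2 * s ^ 2 * ‖d‖ ^ 2)
        (L * s * ‖d‖ ^ 2) s := by
      have := ((hasDerivAt_pow 2 s).const_mul (L / 2)).mul_const (‖d‖ ^ 2)
      have e : L / 2 * ((2:ℕ) * s ^ (2 - 1)) * ‖d‖ ^ 2 = L * s * ‖d‖ ^ 2 := by push_cast; ring
      rw [e] at this; exact this
    exact (h1.sub h2).sub h3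
  have hderiv_nonpos : ∀ s ∈ interior (Set.Icc (0:ℝ) 1), deriv h s ≤ 0 := by
    intro s hs
    rw [interior_Icc] at hs
    rw [(hder s).deriv]
    have hip : ⟪gradient f (x + s • d) - gradient f x, d⟫ ≤ L * s * ‖d‖ ^ 2 := by
      calc ⟪gradient f (x + s • d) - gradient f x, d⟫
          ≤ ‖gradient f (x + s • d) - gradient f x‖ * ‖d‖ := real_inner_le_norm _ _
        _ ≤ (L * ‖(x + s • d) - x‖) * ‖d‖ := by
            have := hlip (x + s • d) x
            have hn : (0:ℝ) ≤ ‖d‖ := norm_nonneg _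
            nlinarith [norm_nonneg (gradient f (x + s • d) - gradient f x)]
        _ = L * s * ‖d‖ ^ 2 := by
            simp [norm_smul, abs_of_nonneg hs.1.le]
            ring
    rw [inner_sub_left] at hip
    simp only [hc] at hip ⊢
    linarith
  have hcont : ContinuousOn h (Set.Icc 0 1) :=
    fun s _ => (hder s).differentiableAt.continuousAt.continuousWithinAt
  have hdiffOn : DifferentiableOn ℝ h (interior (Set.Icc (0:ℝ) 1)) :=
    fun s _ => (hder s).differentiableAt.differentiableWithinAt
  have hanti := antitoneOn_of_deriv_nonpos (convex_Icc 0 1) hcont hdiffOn hderiv_nonpos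
  have := hanti (Set.left_mem_Icc.mpr zero_le_one) (Set.right_mem_Icc.mpr zero_le_one)
    zero_le_one
  simp only [hh] at this
  have hxy : x + (1:ℝ) • d = y := by rw [hd]; module
  rw [hxy] at this
  simp at this
  linarith

end Aux

theorem gradient_descent_convergence {n : ℕ}
    (f : EuclideanSpace ℝ (Fin n) → ℝ) (L t : ℝ)
    (hL : 0 < L) (hconv : ConvexOn ℝ Set.univ f) (hdiff : Differentiable ℝ f)
    (hlip : ∀ x y, ‖gradient f x - gradient f y‖ ≤ L * ‖x - y‖)
    (ht : 0 < t) (ht' : t ≤ 1 / L)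
    (u : ℕ → EuclideanSpace ℝ (Fin n))
    (hstep : ∀ k, u (k + 1) = u k - t • gradient f (u k))
    (ustar : EuclideanSpace ℝ (Fin n)) (hmin : ∀ v, f ustar ≤ f v)
    (k : ℕ) (hk : 0 < k) :
    f (u k) - f ustar ≤ ‖u 0 - ustar‖ ^ 2 / (2 * t * k) := by
  have htL : t * L ≤ 1 := by
    rw [le_div_iff₀ hL] at ht'; linarith
  -- one-step decrease
  have hdec : ∀ i, f (u (i + 1)) ≤ f (u i) - t / 2 * ‖gradient f (u i)‖ ^ 2 := by
    intro i
    have hD := descent_lemma f L hL hdiff hlip (u i) (u (i + 1))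
    have hsub : u (i + 1) - u i = -(t • gradient f (u i)) := by
      rw [hstep i]; abel
    rw [hsub] at hD
    have h1 : ⟪gradient f (u i), -(t • gradient f (u i))⟫
        = -(t * ‖gradient f (u i)‖ ^ 2) := by
      rw [inner_neg_right, real_inner_smul_right, real_inner_self_eq_norm_sq]
    have h2 : ‖-(t • gradient f (u i))‖ ^ 2 = t ^ 2 * ‖gradient f (u i)‖ ^ 2 := by
      rw [norm_neg, norm_smul, mul_pow, Real.norm_eq_abs, sq_abs]
    rw [h1, h2] at hD
    nlinarith [sq_nonneg ‖gradient f (u i)‖]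
  -- per-step bound vs optimum
  have hstepbound : ∀ i, f (u (i + 1)) - f ustar
      ≤ (‖u i - ustar‖ ^ 2 - ‖u (i + 1) - ustar‖ ^ 2) / (2 * t) := by
    intro i
    set g := gradient f (u i) with hg
    have hcvx := convex_grad_le f hconv hdiff (u i) ustar
    -- f (u i) ≤ f ustar + ⟪g, u i - ustar⟫
    have hcvx' : f (u i) ≤ f ustar + ⟪g, u i - ustar⟫ := by
      have : ⟪g, ustar - u i⟫ = -⟪g, u i - ustar⟫ := by
        rw [← inner_neg_right]; congr 1; abel
      rw [this] at hcvx; linarith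
    have hnorm : ‖u (i + 1) - ustar‖ ^ 2
        = ‖u i - ustar‖ ^ 2 - 2 * t * ⟪g, u i - ustar⟫ + t ^ 2 * ‖g‖ ^ 2 := by
      have : u (i + 1) - ustar = (u i - ustar) - t • g := by
        rw [hstep i, hg]; abel
      rw [this, norm_sub_sq_real, real_inner_smul_right, norm_smul, mul_pow,
        Real.norm_eq_abs, sq_abs, real_inner_comm]
      ring
    have hd := hdec i
    rw [← hg] at hd
    rw [le_div_iff₀ (by linarith : (0:ℝ) < 2 * t)]
    have key : f (u (i + 1)) - f ustar ≤ ⟪g, u i - ustar⟫ - t / 2 * ‖g‖ ^ 2 := by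
      linarith
    nlinarith [mul_le_mul_of_nonneg_right key (by linarith : (0:ℝ) ≤ 2 * t), hnorm]
  -- monotonicity of the iterates' values
  have hmono : ∀ i j, i ≤ j → f (u j) ≤ f (u i) := by
    have : Antitone (fun i => f (u i)) := by
      apply antitone_nat_of_succ_le
      intro i
      have := hdec i
      nlinarith [sq_nonneg ‖gradient f (u i)‖]
    exact fun i j h => this h
  -- sum the per-step bounds
  have hsum : (k : ℝ) * (f (u k) - f ustar)
      ≤ ‖u 0 - ustar‖ ^ 2 / (2 * t) := by
    have h1 : (k : ℝ) * (f (u k) - f ustar)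
        ≤ ∑ i ∈ Finset.range k, (f (u (i + 1)) - f ustar) := by
      calc (k : ℝ) * (f (u k) - f ustar)
            = ∑ _i ∈ Finset.range k, (f (u k) - f ustar) := by
              rw [Finset.sum_const, Finset.card_range, nsmul_eq_mul]
          _ ≤ ∑ i ∈ Finset.range k, (f (u (i + 1)) - f ustar) := by
              apply Finset.sum_le_sum
              intro i hi
              have : f (u k) ≤ f (u (i + 1)) :=
                hmono (i + 1) k (Finset.mem_range.mp hi)
              linarith
    have h2 : ∑ i ∈ Finset.range k, (f (u (i + 1)) - f ustar)
        ≤ ∑ i ∈ Finset.range k,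
          ((‖u i - ustar‖ ^ 2 - ‖u (i + 1) - ustar‖ ^ 2) / (2 * t)) :=
      Finset.sum_le_sum fun i _ => hstepbound i
    have h3 : ∑ i ∈ Finset.range k,
        ((‖u i - ustar‖ ^ 2 - ‖u (i + 1) - ustar‖ ^ 2) / (2 * t))
        = (‖u 0 - ustar‖ ^ 2 - ‖u k - ustar‖ ^ 2) / (2 * t) := by
      rw [← Finset.sum_div]
      congr 1
      exact Finset.sum_range_sub' (fun i => ‖u i - ustar‖ ^ 2) k
    have h4 : (‖u 0 - ustar‖ ^ 2 - ‖u k - ustar‖ ^ 2) / (2 * t)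
        ≤ ‖u 0 - ustar‖ ^ 2 / (2 * t) := by
      apply div_le_div_of_nonneg_right ?_ (by linarith)
      · nlinarith [sq_nonneg ‖u k - ustar‖]
    linarith
  have hkpos : (0:ℝ) < (k : ℝ) := Nat.cast_pos.mpr hk
  have hfin : f (u k) - f ustar ≤ ‖u 0 - ustar‖ ^ 2 / (2 * t) / k := by
    rw [le_div_iff₀ hkpos, mul_comm]
    exact hsum
  simpa [div_div, mul_assoc] using hfin
end

section
/- If f = g + h where g : ℝⁿ → ℝ is convex and differentiable with L-Lipschitz gradient and h : ℝⁿ → ℝ ∪ {+∞} is convex, then the proximal gradient iterates u^{k+1} = prox_{h,t}(u^k − t∇g(u^k)) with fixed step size t ≤ 1/L satisfy f(u^k) − f(u*) ≤ ‖u⁰ − u*‖²/(2tk), where u* minimizes f. -/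
open RealInnerProductSpace

section Aux

variable {E : Type*} [NormedAddCommGroup E] [InnerProductSpace ℝ E] [CompleteSpace E]

lemma pgc_line_hasDerivAt (g : E → ℝ) (hd : Differentiable ℝ g) (x v : E) (s : ℝ) :
    HasDerivAt (fun s : ℝ => g (x + s • v)) ⟪gradient g (x + s • v), v⟫ s := by
  have h1 : HasDerivAt (fun s : ℝ => x + s • v) v s := by
    simpa using ((hasDerivAt_id s).smul_const v).const_add x
  have h2 := ((hd (x + s • v)).hasGradientAt).hasFDerivAt
  have := h2.comp_hasDerivAt s h1
  simpa [Function.comp_def] using this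

lemma pgc_convex_grad_ineq (g : E → ℝ) (hg : ConvexOn ℝ Set.univ g)
    (hd : Differentiable ℝ g) (x y : E) :
    g x + ⟪gradient g x, y - x⟫ ≤ g y := by
  set v := y - x with hv
  have hφ : ConvexOn ℝ Set.univ (fun s : ℝ => g (x + s • v)) := by
    have := hg.comp_affineMap (AffineMap.lineMap x (x + v))
    simp only [Set.preimage_univ] at this
    have e : (fun s : ℝ => g (x + s • v)) = g ∘ AffineMap.lineMap x (x + v) := by
      funext s; simp [AffineMap.lineMap_apply, add_comm]
    rw [e]; exact this
  have hder := pgc_line_hasDerivAt g hd x v 0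
  simp only [zero_smul, add_zero] at hder
  have := hφ.le_slope_of_hasDerivAt (Set.mem_univ (0:ℝ)) (Set.mem_univ (1:ℝ))
    zero_lt_one hder
  simp only [slope_def_field, one_smul, zero_smul, add_zero, div_one, sub_zero] at this
  have hxy : x + v = y := by rw [hv]; abel
  rw [hxy] at this
  linarith

lemma pgc_descent_lemma (g : E → ℝ) (hd : Differentiable ℝ g) (L : ℝ)
    (hlip : ∀ x y, ‖gradient g x - gradient g y‖ ≤ L * ‖x - y‖) (x y : E) :
    g y ≤ g x + ⟪gradient g x, y - x⟫ + L / 2 * ‖y - x‖ ^ 2 := by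
  set v := y - x with hv
  set ψ : ℝ → ℝ := fun s => g (x + s • v) - s * ⟪gradient g x, v⟫ - L * ‖v‖ ^ 2 * s ^ 2 / 2
    with hψ
  have hder : ∀ s : ℝ, HasDerivAt ψ
      (⟪gradient g (x + s • v) - gradient g x, v⟫ - L * ‖v‖ ^ 2 * s) s := by
    intro s
    have h1 := pgc_line_hasDerivAt g hd x v s
    have h2 : HasDerivAt (fun s : ℝ => s * ⟪gradient g x, v⟫) ⟪gradient g x, v⟫ s := by
      simpa using (hasDerivAt_id s).mul_const _
    have h3 : HasDerivAt (fun s : ℝ => L * ‖v‖ ^ 2 * s ^ 2 / 2) (L * ‖v‖ ^ 2 * s) s := by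
      have := ((hasDerivAt_pow 2 s).const_mul (L * ‖v‖ ^ 2)).div_const 2
      refine this.congr_deriv ?_
      norm_num
      ring
    rw [inner_sub_left]
    exact (h1.sub h2).sub h3
  have hanti : AntitoneOn ψ (Set.Icc 0 1) := by
    apply antitoneOn_of_deriv_nonpos (convex_Icc 0 1)
    · have hdiff : Differentiable ℝ ψ := fun s => (hder s).differentiableAt
      exact hdiff.continuous.continuousOn
    · intro s _
      exact (hder s).differentiableAt.differentiableWithinAt
    · intro s hs
      rw [interior_Icc] at hs
      rw [(hder s).deriv]
      have h5 : ⟪gradient g (x + s • v) - gradient g x, v⟫ ≤ L * s * ‖v‖ ^ 2 := by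
        calc ⟪gradient g (x + s • v) - gradient g x, v⟫
            ≤ ‖gradient g (x + s • v) - gradient g x‖ * ‖v‖ := real_inner_le_norm _ _
          _ ≤ (L * ‖(x + s • v) - x‖) * ‖v‖ := by
              have := hlip (x + s • v) x
              exact mul_le_mul_of_nonneg_right this (norm_nonneg _)
          _ = L * s * ‖v‖ ^ 2 := by
              rw [add_sub_cancel_left, norm_smul, Real.norm_eq_abs, abs_of_pos hs.1]; ring
      nlinarith [hs.1.le]
  have := hanti (Set.mem_Icc.mpr ⟨le_refl 0, zero_le_one⟩)
    (Set.mem_Icc.mpr ⟨zero_le_one, le_refl 1⟩) zero_le_one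
  simp only [hψ, zero_smul, add_zero, one_smul, zero_mul, mul_zero] at this
  have hxy : x + v = y := by rw [hv]; abel
  rw [hxy] at this
  nlinarith [this]

lemma pgc_prox_opt (h : E → EReal) (t : ℝ) (ht : 0 < t) (w p : E)
    (hbot : ∀ x, h x ≠ ⊥)
    (hconv : ∀ x y, ∀ θ : ℝ, 0 ≤ θ → θ ≤ 1 →
      h (θ • x + (1 - θ) • y) ≤ (θ : EReal) * h x + ((1 - θ : ℝ) : EReal) * h y)
    (hp : h p ≠ ⊤)
    (hmin : ∀ z, ((1 / (2 * t) * ‖w - p‖ ^ 2 : ℝ) : EReal) + h p ≤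
      ((1 / (2 * t) * ‖w - z‖ ^ 2 : ℝ) : EReal) + h z)
    (z : E) (hz : h z ≠ ⊤) :
    (h p).toReal + (1 / t) * ⟪w - p, z - p⟫ ≤ (h z).toReal := by
  set hpr := (h p).toReal with hhp
  set hzr := (h z).toReal with hhz
  set I := (⟪w - p, z - p⟫ : ℝ) with hI
  set N := (‖z - p‖ ^ 2 : ℝ) with hN
  have hpe : h p = (hpr : EReal) := (EReal.coe_toReal hp (hbot p)).symm
  have hze : h z = (hzr : EReal) := (EReal.coe_toReal hz (hbot z)).symm
  have h2t : (0:ℝ) < 2 * t := by linarith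
  have key : ∀ θ : ℝ, 0 < θ → θ ≤ 1 →
      2 * ((hpr - hzr) * t + I) ≤ θ * N := by
    intro θ hθ0 hθ1
    have h1 := hmin (θ • z + (1 - θ) • p)
    have h2 := hconv z p θ hθ0.le hθ1
    have h3 : ((1 / (2 * t) * ‖w - p‖ ^ 2 : ℝ) : EReal) + h p ≤
        ((1 / (2 * t) * ‖w - (θ • z + (1 - θ) • p)‖ ^ 2 : ℝ) : EReal) +
          ((θ * hzr + (1 - θ) * hpr : ℝ) : EReal) := by
      refine h1.trans (add_le_add_right ?_ _)
      rw [hpe, hze] at h2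
      refine h2.trans (le_of_eq ?_)
      rw [← EReal.coe_mul, ← EReal.coe_mul, ← EReal.coe_add]
    rw [hpe, ← EReal.coe_add, ← EReal.coe_add, EReal.coe_le_coe_iff] at h3
    have hexp : ‖w - (θ • z + (1 - θ) • p)‖ ^ 2 =
        ‖w - p‖ ^ 2 - 2 * θ * I + θ ^ 2 * N := by
      have heq : w - (θ • z + (1 - θ) • p) = (w - p) - θ • (z - p) := by
        rw [smul_sub, sub_smul, one_smul]; abel
      rw [heq, norm_sub_sq_real, real_inner_smul_right, norm_smul, Real.norm_eq_abs]
      rw [mul_pow, sq_abs, hI, hN]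
      ring
    rw [hexp] at h3
    have h5 : (2 * θ * I - θ ^ 2 * N) * (1 / (2 * t)) ≤ θ * (hzr - hpr) := by
      nlinarith [h3]
    rw [mul_one_div, div_le_iff₀ h2t] at h5
    have h6 : θ * (2 * ((hpr - hzr) * t + I)) ≤ θ * (θ * N) := by nlinarith [h5]
    exact le_of_mul_le_mul_left h6 hθ0
  have hc0 : (0:ℝ) ≤ N := by positivity
  set a := 2 * ((hpr - hzr) * t + I) with ha
  have hale : a ≤ 0 := by
    by_contra hcon
    push_neg at hcon
    set θ0 := min 1 (a / (2 * (N + 1))) with hθ0def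
    have hθ := key θ0 (by positivity) (min_le_left _ _)
    have hmin2 : θ0 ≤ a / (2 * (N + 1)) := min_le_right _ _
    have h7 : θ0 * N ≤ (a / (2 * (N + 1))) * N := mul_le_mul_of_nonneg_right hmin2 hc0
    have h8 : (a / (2 * (N + 1))) * N < a := by
      rw [div_mul_eq_mul_div, div_lt_iff₀ (by positivity)]
      nlinarith
    linarith
  have h9 : I / t ≤ hzr - hpr := by rw [div_le_iff₀ ht]; linarith
  rw [one_div_mul_eq_div]
  linarith

end Aux

theorem proximal_gradient_convergence {n : ℕ}
    (g : EuclideanSpace ℝ (Fin n) → ℝ)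
    (h : EuclideanSpace ℝ (Fin n) → EReal) (L t : ℝ)
    (hL : 0 < L) (hgconv : ConvexOn ℝ Set.univ g) (hgdiff : Differentiable ℝ g)
    (hglip : ∀ x y, ‖gradient g x - gradient g y‖ ≤ L * ‖x - y‖)
    (hbot : ∀ x, h x ≠ ⊥) (hproper : ∃ x, h x ≠ ⊤)
    (hlsc : LowerSemicontinuous h)
    (hconv : ∀ x y, ∀ θ : ℝ, 0 ≤ θ → θ ≤ 1 →
      h (θ • x + (1 - θ) • y) ≤ (θ : EReal) * h x + ((1 - θ : ℝ) : EReal) * h y)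
    (ht : 0 < t) (ht' : t ≤ 1 / L)
    (u : ℕ → EuclideanSpace ℝ (Fin n))
    (hstep : ∀ k, ∀ z,
      ((1 / (2 * t) * ‖u k - t • gradient g (u k) - u (k + 1)‖ ^ 2 : ℝ) : EReal)
          + h (u (k + 1)) ≤
        ((1 / (2 * t) * ‖u k - t • gradient g (u k) - z‖ ^ 2 : ℝ) : EReal) + h z)
    (ustar : EuclideanSpace ℝ (Fin n))
    (hmin : ∀ v, (g ustar : EReal) + h ustar ≤ (g v : EReal) + h v)
    (k : ℕ) (hk : 0 < k) :
    (g (u k) : EReal) + h (u k) ≤ (g ustar : EReal) + h ustar +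
      ((‖u 0 - ustar‖ ^ 2 / (2 * t * k) : ℝ) : EReal) := by
  obtain ⟨z₀, hz₀⟩ := hproper
  -- finiteness of h along the iterates (from index 1 on) and at ustar
  have htop : ∀ j : ℕ, h (u (j + 1)) ≠ ⊤ := by
    intro j heq
    have h1 := hstep j z₀
    rw [heq, EReal.coe_add_top, top_le_iff] at h1
    exact (EReal.add_lt_top (EReal.coe_ne_top _) hz₀).ne h1
  have hstop : h ustar ≠ ⊤ := by
    intro heq
    have h1 := hmin z₀
    rw [heq, EReal.coe_add_top, top_le_iff] at h1
    exact (EReal.add_lt_top (EReal.coe_ne_top _) hz₀).ne h1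
  -- key real one-step inequality
  have key : ∀ j : ℕ, ∀ z, h z ≠ ⊤ →
      g (u (j + 1)) + (h (u (j + 1))).toReal ≤ g z + (h z).toReal +
        1 / (2 * t) * (‖u j - z‖ ^ 2 - ‖u (j + 1) - z‖ ^ 2) := by
    intro j z hz
    set x := u j
    set p := u (j + 1)
    set d := gradient g x with hd
    have A := pgc_convex_grad_ineq g hgconv hgdiff x z
    have B := pgc_descent_lemma g hgdiff L hglip x p
    have C := pgc_prox_opt h t ht (x - t • d) p hbot hconv (htop j) (hstep j) z hz
    have e1 : ⟪d, p - x⟫ + ⟪d, z - p⟫ = ⟪d, z - x⟫ := by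
      simp only [inner_sub_right]; ring
    have e2 : ‖x - z‖ ^ 2 - ‖p - z‖ ^ 2 = ‖p - x‖ ^ 2 - 2 * ⟪x - p, z - p⟫ := by
      have h' : x - z = (x - p) + (p - z) := by abel
      rw [h', norm_add_sq_real]
      have h'' : (p - z) = -(z - p) := by abel
      rw [h'', inner_neg_right, norm_neg, norm_sub_rev x p]
      ring
    have e3 : ⟪(x - t • d) - p, z - p⟫ = ⟪x - p, z - p⟫ - t * ⟪d, z - p⟫ := by
      rw [show (x - t • d) - p = (x - p) - t • d by abel, inner_sub_left,
        real_inner_smul_left]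
    rw [e3] at C
    have e4 : (1 / t) * (⟪x - p, z - p⟫ - t * ⟪d, z - p⟫) =
        (1 / t) * ⟪x - p, z - p⟫ - ⟪d, z - p⟫ := by
      field_simp
    rw [e4] at C
    have hLt : L ≤ 1 / t := by
      rw [le_div_iff₀ ht]
      calc L * t ≤ L * (1 / L) := mul_le_mul_of_nonneg_left ht' hL.le
        _ = 1 := by field_simp
    have f4 : L * ‖p - x‖ ^ 2 ≤ (1 / t) * ‖p - x‖ ^ 2 :=
      mul_le_mul_of_nonneg_right hLt (sq_nonneg _)
    have e5 : 1 / (2 * t) * (‖x - z‖ ^ 2 - ‖p - z‖ ^ 2) =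
        (1 / 2) * ((1 / t) * ‖p - x‖ ^ 2) - (1 / t) * ⟪x - p, z - p⟫ := by
      rw [e2]; ring
    rw [e5]
    linarith
  set F : ℕ → ℝ := fun j => g (u j) + (h (u j)).toReal with hF
  set Fs : ℝ := g ustar + (h ustar).toReal with hFs
  clear_value F Fs
  have step_star : ∀ j : ℕ, F (j + 1) ≤ Fs +
      1 / (2 * t) * (‖u j - ustar‖ ^ 2 - ‖u (j + 1) - ustar‖ ^ 2) := by
    intro j
    have := key j ustar hstop
    simpa [hF, hFs, add_assoc] using this
  have step_mono : ∀ j : ℕ, F (j + 2) ≤ F (j + 1) := by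
    intro j
    have h1 := key (j + 1) (u (j + 1)) (htop j)
    have h2 : ‖u (j + 1) - u (j + 1)‖ ^ 2 = 0 := by simp
    have h3 : (0:ℝ) ≤ 1 / (2 * t) * ‖u (j + 1 + 1) - u (j + 1)‖ ^ 2 := by positivity
    rw [h2] at h1
    simp only [hF]
    have : (j + 2) = (j + 1) + 1 := rfl
    rw [this]
    linarith
  -- telescoping by induction
  have main : ∀ m : ℕ, 1 ≤ m → (m : ℝ) * F m ≤ (m : ℝ) * Fs +
      1 / (2 * t) * (‖u 0 - ustar‖ ^ 2 - ‖u m - ustar‖ ^ 2) := by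
    intro m hm
    induction m, hm using Nat.le_induction with
    | base =>
      have := step_star 0
      push_cast
      linarith
    | succ m hm ih =>
      obtain ⟨j, rfl⟩ : ∃ j, m = j + 1 := ⟨m - 1, by omega⟩
      have h1 := step_star (j + 1)
      have h2 : F (j + 1 + 1) ≤ F (j + 1) := step_mono j
      have h3 : ((j:ℝ) + 1) * F (j + 1 + 1) ≤ ((j:ℝ) + 1) * F (j + 1) := by
        apply mul_le_mul_of_nonneg_left h2
        positivity
      push_cast at ih ⊢
      linarith
  have hk1 : 1 ≤ k := hk
  have hmain := main k hk1
  have hkpos : (0:ℝ) < (k:ℝ) := by exact_mod_cast hk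
  have hnn : (0:ℝ) ≤ 1 / (2 * t) * ‖u k - ustar‖ ^ 2 := by positivity
  have hdiv : (k:ℝ) * (‖u 0 - ustar‖ ^ 2 / (2 * t * k)) = 1 / (2 * t) * ‖u 0 - ustar‖ ^ 2 := by
    field_simp
  have hreal : F k ≤ Fs + ‖u 0 - ustar‖ ^ 2 / (2 * t * k) := by
    have h1 : (k:ℝ) * F k ≤ (k:ℝ) * (Fs + ‖u 0 - ustar‖ ^ 2 / (2 * t * k)) := by
      linarith [hmain, hnn, hdiv]
    exact le_of_mul_le_mul_left h1 hkpos
  -- convert back to EReal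
  obtain ⟨j, rfl⟩ : ∃ j, k = j + 1 := ⟨k - 1, by omega⟩
  have hke : h (u (j + 1)) = (((h (u (j + 1))).toReal : ℝ) : EReal) :=
    (EReal.coe_toReal (htop j) (hbot _)).symm
  have hse : h ustar = (((h ustar).toReal : ℝ) : EReal) :=
    (EReal.coe_toReal hstop (hbot _)).symm
  rw [hke, hse, ← EReal.coe_add, ← EReal.coe_add, ← EReal.coe_add, EReal.coe_le_coe_iff]
  simp only [hF, hFs] at hreal
  exact hreal
end
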